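/- Let N₀ ≥ 2, 0 = x_0 < x_1 < ⋯ < x_{N₀} = 1, with the conventions x_{−1} := 0 and x_{N₀+1} := 1. Let a : (0,1) → ℝ be continuous with a(x) > 0, let k, f : (0,1) → ℂ be continuous, and let g_0, g_1 ∈ ℂ. Let f_0, …, f_{N₀} : (0,1) → ℂ satisfy Σ_{j=0}^{N₀} f_j(x) = f(x) for all x ∈ (0,1) and f_j(x) = 0 for x ∉ (x_{j−1}, x_{j+1}). For each 0 ≤ j ≤ N₀, let u_j : [0,1] → ℂ be continuous with u_j = 0 on [0,1] ∖ [x_{j−1}, x_{j+1}], u_0(0) = g_0, u_{N₀}(1) = g_1, u_j(x_{j−1}) = 0 for j ≥ 1 and u_j(x_{j+1}) = 0 for j ≤ N₀−1, such that on (x_{j−1}, x_{j+1}) ∩ (0,1) the function u_j is differentiable, a·u_j' is differentiable, and (a u_j')' + k u_j = f_j; moreover, at each interior grid point x_m (1 ≤ m ≤ N₀−1) the one-sided limits lim_{x→x_m⁻} a(x)u_{m−1}'(x) and lim_{x→x_m⁺} a(x)u_{m+1}'(x) exist. For each 1 ≤ j ≤ N₀−1, let v_j : [0,1] → ℂ be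 continuous with v_j = 0 on [0,1] ∖ [x_{j−1}, x_{j+1}] and v_j(x_{j−1}) = v_j(x_{j+1}) = 0, such that on (x_{j−1}, x_j) ∪ (x_j, x_{j+1}) the function v_j is differentiable, a·v_j' is differentiable, and (a v_j')' + k v_j = 0; the one-sided limits of a·v_j' at x_{j−1}⁺, x_j⁻, x_j⁺ and x_{j+1}⁻ exist; and lim_{x→x_j⁺} a(x)v_j'(x) − lim_{x→x_j⁻} a(x)v_j'(x) = 1. Suppose μ_1, …, μ_{N₀−1} ∈ ℂ satisfy the linking equations: for every 1 ≤ m ≤ N₀−1 (with the conventions μ_0 = μ_{N₀} = 0 and v_0 = v_{N₀} = 0), μ_m + μ_{m+1}·lim_{x→x_m⁺} a(x)v_{m+1}'(x) − μ_{m−1}·lim_{x→x_m⁻} a(x)v_{m−1}'(x) + lim_{x→x_m⁺} a(x)u_{m+1}'(x) − lim_{x→x_m⁻} a(x)u_{m−1}'(x) = 0. Then the function u := Σ_{j=0}^{N₀} u_j + Σ_{j=1}^{N₀−1} μ_j v_j is continuous on [0,1] with u(0) = g_0 and u(1) = g_1; u is differentiable on (0,1); a·u' is differentiable on (0,1); and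 (a u')' + k u = f on (0,1). -/

import Mathlib

open Filter Topology Set

lemma glue_point {U : ℝ → ℂ} {p : ℝ} {c : ℂ}
    (hUc : ContinuousAt U p)
    (hdiff : ∀ᶠ z in 𝓝[≠] p, DifferentiableAt ℝ U z)
    (hd : Tendsto (fun z => deriv U z) (𝓝[≠] p) (𝓝 c)) :
    HasDerivAt U c p := by
  have hIio : Iio p ∈ 𝓝[<] p := self_mem_nhdsWithin
  have hIoi : Ioi p ∈ 𝓝[>] p := self_mem_nhdsWithin
  have hlt_le : 𝓝[<] p ≤ 𝓝[≠] p := nhdsWithin_mono _ fun z hz => ne_of_lt hz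
  have hgt_le : 𝓝[>] p ≤ 𝓝[≠] p := nhdsWithin_mono _ fun z hz => ne_of_gt hz
  have hl : HasDerivWithinAt U c (Iic p) p := by
    refine hasDerivWithinAt_Iic_of_tendsto_deriv
      (s := {z | DifferentiableAt ℝ U z} ∩ Iio p) ?_ ?_ ?_ ?_
    · exact fun z hz => hz.1.differentiableWithinAt
    · exact hUc.continuousWithinAt
    · exact Filter.inter_mem (hlt_le hdiff) hIio
    · exact hd.mono_left hlt_le
  have hr : HasDerivWithinAt U c (Ici p) p := by
    refine hasDerivWithinAt_Ici_of_tendsto_deriv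
      (s := {z | DifferentiableAt ℝ U z} ∩ Ioi p) ?_ ?_ ?_ ?_
    · exact fun z hz => hz.1.differentiableWithinAt
    · exact hUc.continuousWithinAt
    · exact Filter.inter_mem (hgt_le hdiff) hIoi
    · exact hd.mono_left hgt_le
  have := hl.union hr
  rwa [Iic_union_Ici, hasDerivWithinAt_univ] at this

/-- Theorem 2.2 of the paper, the main Dirac Assisted Tree theorem, in
classical pointwise form, for Dirichlet boundary conditions `u(0) = g₀`, `u(1) = g₁`.
The grid is `0 = x_0 < x_1 < ⋯ < x_{N₀} = 1` with the conventions `x_{−1} = 0`,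
`x_{N₀+1} = 1`; the `u_j` are the local solutions of `(a u_j')' + k u_j = f_j`, the `v_j`
are the Dirac-assisted local solutions (unit jump of the flux `a·v_j'` across `x_j`), and
the linking equations determine the coefficients `μ_j`.  Then
`u = ∑_j u_j + ∑_j μ_j v_j` solves `(a u')' + k u = f` on `(0, 1)` with `u(0) = g₀`,
`u(1) = g₁`. -/
theorem dirac_assisted_tree_assembles_global_solution
    (N₀ : ℕ) (hN₀ : 2 ≤ N₀) (x : ℤ → ℝ)
    (hxm1 : x (-1) = 0) (hx0 : x 0 = 0) (hxN : x (N₀ : ℤ) = 1) (hxN1 : x ((N₀ : ℤ) + 1) = 1)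
    (hmono : ∀ i : ℤ, 0 ≤ i → i < (N₀ : ℤ) → x i < x (i + 1))
    (a : ℝ → ℝ) (haC : ContinuousOn a (Set.Ioo 0 1))
    (hapos : ∀ y ∈ Set.Ioo (0 : ℝ) 1, 0 < a y)
    (k f : ℝ → ℂ) (hkC : ContinuousOn k (Set.Ioo 0 1)) (hfC : ContinuousOn f (Set.Ioo 0 1))
    (g₀ g₁ : ℂ)
    (fj : ℕ → ℝ → ℂ)
    (hfj_sum : ∀ y ∈ Set.Ioo (0 : ℝ) 1, ∑ j ∈ Finset.range (N₀ + 1), fj j y = f y)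
    (hfj_supp : ∀ j : ℕ, j ≤ N₀ →
      ∀ y : ℝ, y ∉ Set.Ioo (x ((j : ℤ) - 1)) (x ((j : ℤ) + 1)) → fj j y = 0)
    (u : ℕ → ℝ → ℂ)
    (huC : ∀ j : ℕ, j ≤ N₀ → ContinuousOn (u j) (Set.Icc 0 1))
    (husupp : ∀ j : ℕ, j ≤ N₀ → ∀ y ∈ Set.Icc (0 : ℝ) 1,
      y ∉ Set.Icc (x ((j : ℤ) - 1)) (x ((j : ℤ) + 1)) → u j y = 0)
    (hu0 : u 0 0 = g₀) (huN : u N₀ 1 = g₁)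
    (huL : ∀ j : ℕ, 1 ≤ j → j ≤ N₀ → u j (x ((j : ℤ) - 1)) = 0)
    (huR : ∀ j : ℕ, j ≤ N₀ - 1 → u j (x ((j : ℤ) + 1)) = 0)
    (hueq : ∀ j : ℕ, j ≤ N₀ →
      ∀ y ∈ Set.Ioo (x ((j : ℤ) - 1)) (x ((j : ℤ) + 1)) ∩ Set.Ioo (0 : ℝ) 1,
        DifferentiableAt ℝ (u j) y ∧
        DifferentiableAt ℝ (fun z => (a z : ℂ) * deriv (u j) z) y ∧
        deriv (fun z => (a z : ℂ) * deriv (u j) z) y + k y * u j y = fj j y)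
    (Lu Ru : ℕ → ℂ)
    (hLu : ∀ m : ℕ, 1 ≤ m → m ≤ N₀ - 1 →
      Tendsto (fun z => (a z : ℂ) * deriv (u (m - 1)) z) (𝓝[<] x (m : ℤ)) (𝓝 (Lu m)))
    (hRu : ∀ m : ℕ, 1 ≤ m → m ≤ N₀ - 1 →
      Tendsto (fun z => (a z : ℂ) * deriv (u (m + 1)) z) (𝓝[>] x (m : ℤ)) (𝓝 (Ru m)))
    (v : ℕ → ℝ → ℂ)
    (hvC : ∀ j : ℕ, 1 ≤ j → j ≤ N₀ - 1 → ContinuousOn (v j) (Set.Icc 0 1))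
    (hvsupp : ∀ j : ℕ, 1 ≤ j → j ≤ N₀ - 1 → ∀ y ∈ Set.Icc (0 : ℝ) 1,
      y ∉ Set.Icc (x ((j : ℤ) - 1)) (x ((j : ℤ) + 1)) → v j y = 0)
    (hvbc : ∀ j : ℕ, 1 ≤ j → j ≤ N₀ - 1 →
      v j (x ((j : ℤ) - 1)) = 0 ∧ v j (x ((j : ℤ) + 1)) = 0)
    (hveq : ∀ j : ℕ, 1 ≤ j → j ≤ N₀ - 1 →
      ∀ y ∈ Set.Ioo (x ((j : ℤ) - 1)) (x (j : ℤ)) ∪ Set.Ioo (x (j : ℤ)) (x ((j : ℤ) + 1)),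
        DifferentiableAt ℝ (v j) y ∧
        DifferentiableAt ℝ (fun z => (a z : ℂ) * deriv (v j) z) y ∧
        deriv (fun z => (a z : ℂ) * deriv (v j) z) y + k y * v j y = 0)
    (Lv Rv : ℕ → ℂ)
    (hLv : ∀ j : ℕ, 1 ≤ j → j ≤ N₀ - 1 →
      Tendsto (fun z => (a z : ℂ) * deriv (v j) z) (𝓝[<] x (j : ℤ)) (𝓝 (Lv j)))
    (hRv : ∀ j : ℕ, 1 ≤ j → j ≤ N₀ - 1 →
      Tendsto (fun z => (a z : ℂ) * deriv (v j) z) (𝓝[>] x (j : ℤ)) (𝓝 (Rv j)))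
    (hjump : ∀ j : ℕ, 1 ≤ j → j ≤ N₀ - 1 → Rv j - Lv j = 1)
    (hv_endL : ∀ j : ℕ, 1 ≤ j → j ≤ N₀ - 1 →
      ∃ c : ℂ, Tendsto (fun z => (a z : ℂ) * deriv (v j) z) (𝓝[>] x ((j : ℤ) - 1)) (𝓝 c))
    (hv_endR : ∀ j : ℕ, 1 ≤ j → j ≤ N₀ - 1 →
      ∃ c : ℂ, Tendsto (fun z => (a z : ℂ) * deriv (v j) z) (𝓝[<] x ((j : ℤ) + 1)) (𝓝 c))
    (μ : ℕ → ℂ) (hμ0 : μ 0 = 0) (hμN : μ N₀ = 0)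
    (VL VR : ℕ → ℂ)
    (hVR : ∀ m : ℕ, 1 ≤ m → m + 1 ≤ N₀ - 1 →
      Tendsto (fun z => (a z : ℂ) * deriv (v (m + 1)) z) (𝓝[>] x (m : ℤ)) (𝓝 (VR m)))
    (hVL : ∀ m : ℕ, 2 ≤ m → m ≤ N₀ - 1 →
      Tendsto (fun z => (a z : ℂ) * deriv (v (m - 1)) z) (𝓝[<] x (m : ℤ)) (𝓝 (VL m)))
    (hlink : ∀ m : ℕ, 1 ≤ m → m ≤ N₀ - 1 →
      μ m + μ (m + 1) * VR m - μ (m - 1) * VL m + Ru m - Lu m = 0) :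
    ∀ U : ℝ → ℂ,
      (U = fun y => ∑ j ∈ Finset.range (N₀ + 1), u j y
          + ∑ j ∈ Finset.Icc 1 (N₀ - 1), μ j * v j y) →
      ContinuousOn U (Set.Icc 0 1) ∧ U 0 = g₀ ∧ U 1 = g₁ ∧
      (∀ y ∈ Set.Ioo (0 : ℝ) 1, DifferentiableAt ℝ U y) ∧
      (∀ y ∈ Set.Ioo (0 : ℝ) 1,
        DifferentiableAt ℝ (fun z => (a z : ℂ) * deriv U z) y) ∧
      (∀ y ∈ Set.Ioo (0 : ℝ) 1,
        deriv (fun z => (a z : ℂ) * deriv U z) y + k y * U y = f y) := by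
  classical
  intro U hU
  -- monotonicity infrastructure
  have hstep : ∀ n : ℕ, ∀ i : ℤ, 0 ≤ i → i + n ≤ (N₀ : ℤ) → x i ≤ x (i + n) := by
    intro n
    induction n with
    | zero => intro i _ _; simp
    | succ n ih =>
      intro i hi hin
      have h1 : x i ≤ x (i + n) := ih i hi (by push_cast at hin ⊢; omega)
      have h2 : x (i + n) < x (i + n + 1) := hmono (i + n) (by positivity) (by push_cast at hin ⊢; omega)
      calc x i ≤ x (i + n) := h1
        _ ≤ x (i + (n+1)) := by rw [show i + ((n:ℤ)+1) = i + n + 1 by ring]; exact h2.le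
  have hle : ∀ i j : ℤ, 0 ≤ i → i ≤ j → j ≤ (N₀ : ℤ) → x i ≤ x j := by
    intro i j hi hij hj
    have h := hstep (j - i).toNat i hi (by omega)
    rwa [show i + ((j - i).toNat : ℤ) = j by omega] at h
  have hle' : ∀ i j : ℤ, -1 ≤ i → i ≤ j → j ≤ (N₀ : ℤ) + 1 → x i ≤ x j := by
    intro i j hi hij hj
    rcases le_or_gt j (-1) with hj1 | hj1
    · have hieq : i = -1 := by omega
      have hjeq : j = -1 := by omega
      rw [hieq, hjeq]
    rcases le_or_gt ((N₀:ℤ) + 1) i with hi1 | hi1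
    · have hieq : i = (N₀:ℤ) + 1 := by omega
      have hjeq : j = (N₀:ℤ) + 1 := by omega
      rw [hieq, hjeq]
    have hi' : x i ≤ x (max i 0) := by
      rcases le_or_gt 0 i with h | h
      · simp [max_eq_left h]
      · have : i = -1 := by omega
        subst this
        rw [hxm1, max_eq_right (by omega : (-1:ℤ) ≤ 0), hx0]
    have hj' : x (min j (N₀ : ℤ)) ≤ x j := by
      rcases le_or_gt j (N₀ : ℤ) with h | h
      · simp [min_eq_left h]
      · have : j = (N₀ : ℤ) + 1 := by omega
        subst this
        rw [hxN1, min_eq_right (by omega : (N₀:ℤ) ≤ (N₀:ℤ) + 1), hxN]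
    calc x i ≤ x (max i 0) := hi'
      _ ≤ x (min j (N₀:ℤ)) := hle _ _ (le_max_right _ _) (by omega) (min_le_right _ _)
      _ ≤ x j := hj'
  have hlt : ∀ i j : ℤ, 0 ≤ i → i < j → j ≤ (N₀ : ℤ) → x i < x j := by
    intro i j hi hij hj
    calc x i < x (i + 1) := hmono i hi (by omega)
      _ ≤ x j := hle _ _ (by omega) (by omega) hj
  -- each open subinterval lies in (0,1)
  have hsub : ∀ m : ℕ, m + 1 ≤ N₀ →
      Set.Ioo (x (m:ℤ)) (x ((m:ℤ)+1)) ⊆ Set.Ioo (0:ℝ) 1 := by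
    intro m hm z hz
    constructor
    · calc (0:ℝ) = x 0 := hx0.symm
        _ ≤ x (m:ℤ) := hle 0 m (by omega) (by omega) (by omega)
        _ < z := hz.1
    · calc z < x ((m:ℤ)+1) := hz.2
        _ ≤ x (N₀:ℤ) := hle _ _ (by omega) (by omega) (by omega)
        _ = 1 := hxN
  -- local representation of U on each open subinterval
  have husum : ∀ m : ℕ, m + 1 ≤ N₀ → ∀ z ∈ Set.Ioo (x (m:ℤ)) (x ((m:ℤ)+1)),
      U z = u m z + u (m+1) z + μ m * v m z + μ (m+1) * v (m+1) z := by
    intro m hm z hz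
    have hz01 : z ∈ Set.Ioo (0:ℝ) 1 := hsub m hm hz
    have hz01' : z ∈ Set.Icc (0:ℝ) 1 := ⟨hz01.1.le, hz01.2.le⟩
    have hpair : ({m, m+1} : Finset ℕ) ⊆ Finset.range (N₀+1) := by
      intro j hj; simp only [Finset.mem_insert, Finset.mem_singleton] at hj
      rcases hj with h | h <;> simp [h] <;> omega
    -- terms outside {m, m+1} have z outside their closed support
    have hout : ∀ j : ℕ, j ≤ N₀ → j ≠ m → j ≠ m + 1 →
        z ∉ Set.Icc (x ((j:ℤ)-1)) (x ((j:ℤ)+1)) := by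
      intro j hjN hjm hjm1 hmem
      rcases lt_or_gt_of_ne (show j ≠ m from hjm) with h | h
      · have : x ((j:ℤ)+1) ≤ x (m:ℤ) := hle _ _ (by omega) (by omega) (by omega)
        exact absurd hmem.2 (not_le.2 (lt_of_le_of_lt this hz.1))
      · have hj1 : (m:ℤ)+1 ≤ (j:ℤ)-1 := by omega
        have : x ((m:ℤ)+1) ≤ x ((j:ℤ)-1) := hle _ _ (by omega) hj1 (by omega)
        exact absurd hmem.1 (not_le.2 (lt_of_lt_of_le hz.2 this))
    have hu_eq : ∑ j ∈ Finset.range (N₀+1), u j z = u m z + u (m+1) z := by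
      rw [← Finset.sum_subset hpair (fun j hj hj2 => by
        simp only [Finset.mem_insert, Finset.mem_singleton, not_or] at hj2
        exact husupp j (by simp at hj; omega) z hz01' (hout j (by simp at hj; omega) hj2.1 hj2.2))]
      rw [Finset.sum_pair (by omega : m ≠ m + 1)]
    have hv_eq : ∑ j ∈ Finset.Icc 1 (N₀-1), μ j * v j z = μ m * v m z + μ (m+1) * v (m+1) z := by
      have h1 : ∑ j ∈ Finset.Icc 1 (N₀-1), μ j * v j z = ∑ j ∈ Finset.Icc 0 N₀, μ j * v j z := by
        apply Finset.sum_subset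
        · intro j hj; simp only [Finset.mem_Icc] at hj ⊢; omega
        · intro j hj hj2
          simp only [Finset.mem_Icc] at hj hj2
          have : j = 0 ∨ j = N₀ := by omega
          rcases this with h | h <;> subst h <;> simp [hμ0, hμN]
      have h2 : ∑ j ∈ ({m, m+1} : Finset ℕ), μ j * v j z = ∑ j ∈ Finset.Icc 0 N₀, μ j * v j z := by
        apply Finset.sum_subset
        · intro j hj; simp only [Finset.mem_insert, Finset.mem_singleton] at hj
          simp only [Finset.mem_Icc]
          rcases hj with h | h <;> omega
        · intro j hj hj2
          simp only [Finset.mem_insert, Finset.mem_singleton, not_or] at hj2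
          simp only [Finset.mem_Icc] at hj
          by_cases hcase : 1 ≤ j ∧ j ≤ N₀ - 1
          · rw [hvsupp j hcase.1 hcase.2 z hz01' (hout j hj.2 hj2.1 hj2.2), mul_zero]
          · have : j = 0 ∨ j = N₀ := by omega
            rcases this with h | h <;> subst h <;> simp [hμ0, hμN]
      rw [h1, ← h2, Finset.sum_pair (by omega : m ≠ m + 1)]
    simp only [hU]; rw [hu_eq, hv_eq]; ring
  -- local representation of f
  have hfrep : ∀ m : ℕ, m + 1 ≤ N₀ → ∀ z ∈ Set.Ioo (x (m:ℤ)) (x ((m:ℤ)+1)),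
      f z = fj m z + fj (m+1) z := by
    intro m hm z hz
    have hz01 : z ∈ Set.Ioo (0:ℝ) 1 := hsub m hm hz
    have hpair : ({m, m+1} : Finset ℕ) ⊆ Finset.range (N₀+1) := by
      intro j hj; simp only [Finset.mem_insert, Finset.mem_singleton] at hj
      rcases hj with h | h <;> simp [h] <;> omega
    rw [← hfj_sum z hz01]
    rw [← Finset.sum_subset hpair (fun j hj hj2 => by
      simp only [Finset.mem_insert, Finset.mem_singleton, not_or] at hj2
      have hjN : j ≤ N₀ := by simp at hj; omega
      apply hfj_supp j hjN
      intro hmem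
      rcases lt_or_gt_of_ne hj2.1 with h | h
      · have : x ((j:ℤ)+1) ≤ x (m:ℤ) := hle _ _ (by omega) (by omega) (by omega)
        exact absurd hmem.2 (not_lt.2 (le_trans this hz.1.le))
      · have : x ((m:ℤ)+1) ≤ x ((j:ℤ)-1) := hle _ _ (by omega) (by omega) (by omega)
        exact absurd hmem.1 (not_lt.2 (le_trans hz.2.le this)))]
    rw [Finset.sum_pair (by omega : m ≠ m + 1)]
  -- Step A: solution properties in the interior of each subinterval
  have stepA : ∀ m : ℕ, m + 1 ≤ N₀ → ∀ z ∈ Set.Ioo (x (m:ℤ)) (x ((m:ℤ)+1)),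
      DifferentiableAt ℝ U z ∧
      DifferentiableAt ℝ (fun w => (a w:ℂ) * deriv U w) z ∧
      deriv (fun w => (a w:ℂ) * deriv U w) z + k z * U z = f z ∧
      (a z:ℂ) * deriv U z
        = (a z:ℂ) * deriv (u m) z + (a z:ℂ) * deriv (u (m+1)) z
          + μ m * ((a z:ℂ) * deriv (v m) z) + μ (m+1) * ((a z:ℂ) * deriv (v (m+1)) z) := by
    intro m hm
    set S := Set.Ioo (x (m:ℤ)) (x ((m:ℤ)+1)) with hSdef
    have hSopen : IsOpen S := isOpen_Ioo
    have hS01 : S ⊆ Set.Ioo (0:ℝ) 1 := hsub m hm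
    have hu_pack : ∀ j : ℕ, (j = m ∨ j = m + 1) → ∀ w ∈ S,
        DifferentiableAt ℝ (u j) w ∧
        DifferentiableAt ℝ (fun t => (a t:ℂ) * deriv (u j) t) w ∧
        deriv (fun t => (a t:ℂ) * deriv (u j) t) w + k w * u j w = fj j w := by
      intro j hj w hw
      have hj' : m ≤ j ∧ j ≤ m + 1 := by rcases hj with h | h <;> omega
      refine hueq j (by omega) w ⟨⟨?_, ?_⟩, hS01 hw⟩
      · exact lt_of_le_of_lt (hle' ((j:ℤ)-1) (m:ℤ) (by omega) (by omega) (by omega)) hw.1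
      · exact lt_of_lt_of_le hw.2 (hle' ((m:ℤ)+1) ((j:ℤ)+1) (by omega) (by omega) (by omega))
    have hv_pack : ∀ j : ℕ, (j = m ∨ j = m + 1) → ∀ w ∈ S,
        DifferentiableAt ℝ (fun t => μ j * v j t) w ∧
        DifferentiableAt ℝ (fun t => μ j * ((a t:ℂ) * deriv (v j) t)) w ∧
        deriv (fun t => μ j * v j t) w = μ j * deriv (v j) w ∧
        deriv (fun t => μ j * ((a t:ℂ) * deriv (v j) t)) w + k w * (μ j * v j w) = 0 := by
      intro j hj w hw
      by_cases hcase : 1 ≤ j ∧ j ≤ N₀ - 1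
      · have hwmem : w ∈ Set.Ioo (x ((j:ℤ)-1)) (x (j:ℤ)) ∪ Set.Ioo (x (j:ℤ)) (x ((j:ℤ)+1)) := by
          rcases hj with h | h
          · refine Or.inr ?_
            rw [h]; exact hw
          · refine Or.inl ⟨?_, ?_⟩
            · rw [show (j:ℤ) - 1 = (m:ℤ) by omega]; exact hw.1
            · rw [show (j:ℤ) = (m:ℤ) + 1 by omega]; exact hw.2
        obtain ⟨hd1, hd2, heq⟩ := hveq j hcase.1 hcase.2 w hwmem
        refine ⟨hd1.const_mul _, hd2.const_mul _, deriv_const_mul _ hd1, ?_⟩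
        rw [deriv_const_mul _ hd2]
        linear_combination μ j * heq
      · have hj0 : μ j = 0 := by
          have hjN : j ≤ N₀ := by rcases hj with h|h <;> omega
          have : j = 0 ∨ j = N₀ := by omega
          rcases this with h | h <;> subst h
          · exact hμ0
          · exact hμN
        refine ⟨?_, ?_, ?_, ?_⟩ <;> simp [hj0]
    intro z hz
    have hnhds : S ∈ 𝓝 z := hSopen.mem_nhds hz
    have hev : ∀ w ∈ S, U w = u m w + u (m+1) w + μ m * v m w + μ (m+1) * v (m+1) w :=
      husum m hm
    have d1 := fun w hw => (hu_pack m (Or.inl rfl) w hw).1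
    have d2 := fun w hw => (hu_pack (m+1) (Or.inr rfl) w hw).1
    have d3 := fun w hw => (hv_pack m (Or.inl rfl) w hw).1
    have d4 := fun w hw => (hv_pack (m+1) (Or.inr rfl) w hw).1
    have hUdiff : ∀ w ∈ S, DifferentiableAt ℝ U w := by
      intro w hw
      have hUev : U =ᶠ[𝓝 w]
          fun t => u m t + u (m+1) t + μ m * v m t + μ (m+1) * v (m+1) t := by
        filter_upwards [hSopen.mem_nhds hw] with t ht
        exact hev t ht
      rw [hUev.differentiableAt_iff]
      exact (((d1 w hw).add (d2 w hw)).add (d3 w hw)).add (d4 w hw)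
    have hderivU : ∀ w ∈ S, deriv U w
        = deriv (u m) w + deriv (u (m+1)) w + μ m * deriv (v m) w
          + μ (m+1) * deriv (v (m+1)) w := by
      intro w hw
      have hUev : U =ᶠ[𝓝 w]
          fun t => u m t + u (m+1) t + μ m * v m t + μ (m+1) * v (m+1) t := by
        filter_upwards [hSopen.mem_nhds hw] with t ht
        exact hev t ht
      rw [hUev.deriv_eq,
        deriv_fun_add (((d1 w hw).fun_add (d2 w hw)).fun_add (d3 w hw)) (d4 w hw),
        deriv_fun_add ((d1 w hw).fun_add (d2 w hw)) (d3 w hw),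
        deriv_fun_add (d1 w hw) (d2 w hw),
        (hv_pack m (Or.inl rfl) w hw).2.2.1,
        (hv_pack (m+1) (Or.inr rfl) w hw).2.2.1]
    have hFrep : ∀ w ∈ S, (a w:ℂ) * deriv U w
        = (a w:ℂ) * deriv (u m) w + (a w:ℂ) * deriv (u (m+1)) w
          + μ m * ((a w:ℂ) * deriv (v m) w) + μ (m+1) * ((a w:ℂ) * deriv (v (m+1)) w) := by
      intro w hw
      rw [hderivU w hw]; ring
    have hFev : (fun w => (a w:ℂ) * deriv U w) =ᶠ[𝓝 z]
        fun w => (a w:ℂ) * deriv (u m) w + (a w:ℂ) * deriv (u (m+1)) w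
          + μ m * ((a w:ℂ) * deriv (v m) w) + μ (m+1) * ((a w:ℂ) * deriv (v (m+1)) w) := by
      filter_upwards [hnhds] with w hw
      exact hFrep w hw
    have D1 := (hu_pack m (Or.inl rfl) z hz).2.1
    have D2 := (hu_pack (m+1) (Or.inr rfl) z hz).2.1
    have D3 := (hv_pack m (Or.inl rfl) z hz).2.1
    have D4 := (hv_pack (m+1) (Or.inr rfl) z hz).2.1
    refine ⟨hUdiff z hz, ?_, ?_, hFrep z hz⟩
    · rw [hFev.differentiableAt_iff]
      exact ((D1.add D2).add D3).add D4
    · rw [hFev.deriv_eq, deriv_fun_add ((D1.fun_add D2).fun_add D3) D4, deriv_fun_add (D1.fun_add D2) D3,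
        deriv_fun_add D1 D2]
      have e1 := (hu_pack m (Or.inl rfl) z hz).2.2
      have e2 := (hu_pack (m+1) (Or.inr rfl) z hz).2.2
      have e3 := (hv_pack m (Or.inl rfl) z hz).2.2.2
      have e4 := (hv_pack (m+1) (Or.inr rfl) z hz).2.2.2
      have hsum := hev z hz
      have hfz := hfrep m hm z hz
      linear_combination e1 + e2 + e3 + e4 + k z * hsum - hfz
  -- global continuity
  have hUcont : ContinuousOn U (Set.Icc 0 1) := by
    rw [hU]
    apply ContinuousOn.add
    · exact continuousOn_finset_sum _ fun j hj => huC j (by simp at hj; omega)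
    · refine continuousOn_finset_sum _ fun j hj => ?_
      simp only [Finset.mem_Icc] at hj
      exact (hvC j hj.1 hj.2).const_smul (μ j) |>.congr fun y _ => by simp [smul_eq_mul]
  -- Step B : at the interior grid points
  have stepB : ∀ m : ℕ, 1 ≤ m → m ≤ N₀ - 1 →
      DifferentiableAt ℝ U (x (m:ℤ)) ∧
      DifferentiableAt ℝ (fun w => (a w:ℂ) * deriv U w) (x (m:ℤ)) ∧
      deriv (fun w => (a w:ℂ) * deriv U w) (x (m:ℤ)) + k (x (m:ℤ)) * U (x (m:ℤ))
        = f (x (m:ℤ)) := by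
    intro m hm1 hm2
    have hmN : m + 1 ≤ N₀ := by omega
    have hm1N : (m - 1) + 1 = m := by omega
    set p := x (m:ℤ) with hpdef
    have hp01 : p ∈ Set.Ioo (0:ℝ) 1 := by
      constructor
      · rw [← hx0]; exact hlt 0 (m:ℤ) (by omega) (by omega) (by omega)
      · rw [← hxN]; exact hlt (m:ℤ) (N₀:ℤ) (by omega) (by omega) (by omega)
    have hcastL : ((m - 1 : ℕ) : ℤ) = (m:ℤ) - 1 := by omega
    have hSL := stepA (m-1) (by omega)
    rw [hcastL, hm1N, show ((m:ℤ) - 1) + 1 = (m:ℤ) by ring] at hSL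
    have hSR := stepA m hmN
    have hxlm : x ((m:ℤ)-1) < p := hlt ((m:ℤ)-1) (m:ℤ) (by omega) (by omega) (by omega)
    have hxrm : p < x ((m:ℤ)+1) := hlt (m:ℤ) ((m:ℤ)+1) (by omega) (by omega) (by omega)
    have hLmem : Set.Ioo (x ((m:ℤ)-1)) p ∈ 𝓝[<] p :=
      Ioo_mem_nhdsLT_of_mem ⟨hxlm, le_refl p⟩
    have hRmem : Set.Ioo p (x ((m:ℤ)+1)) ∈ 𝓝[>] p :=
      Ioo_mem_nhdsGT_of_mem ⟨le_refl p, hxrm⟩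
    -- continuity of the flux of u m at p
    have hum := hueq m (by omega) p ⟨⟨hxlm, hxrm⟩, hp01⟩
    have hCm : Tendsto (fun w => (a w:ℂ) * deriv (u m) w) (𝓝 p)
        (𝓝 ((a p:ℂ) * deriv (u m) p)) := hum.2.1.continuousAt
    -- left flux limit
    have hFL : Tendsto (fun w => (a w:ℂ) * deriv U w) (𝓝[<] p)
        (𝓝 (Lu m + (a p:ℂ) * deriv (u m) p + μ (m-1) * VL m + μ m * Lv m)) := by
      have hEq : (fun w => (a w:ℂ) * deriv (u (m-1)) w + (a w:ℂ) * deriv (u m) w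
            + μ (m-1) * ((a w:ℂ) * deriv (v (m-1)) w) + μ m * ((a w:ℂ) * deriv (v m) w))
          =ᶠ[𝓝[<] p] (fun w => (a w:ℂ) * deriv U w) := by
        filter_upwards [hLmem] with w hw
        exact ((hSL w hw).2.2.2).symm
      refine Tendsto.congr' hEq ?_
      have t1 : Tendsto (fun w => (a w:ℂ) * deriv (u (m-1)) w) (𝓝[<] p) (𝓝 (Lu m)) :=
        hLu m hm1 hm2
      have t2 : Tendsto (fun w => (a w:ℂ) * deriv (u m) w) (𝓝[<] p)
          (𝓝 ((a p:ℂ) * deriv (u m) p)) := hCm.mono_left nhdsWithin_le_nhds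
      have t3 : Tendsto (fun w => μ (m-1) * ((a w:ℂ) * deriv (v (m-1)) w)) (𝓝[<] p)
          (𝓝 (μ (m-1) * VL m)) := by
        by_cases hc : 2 ≤ m
        · exact (hVL m hc hm2).const_mul _
        · have hz : m - 1 = 0 := by omega
          simp only [hz, hμ0, zero_mul]
          exact tendsto_const_nhds
      have t4 : Tendsto (fun w => μ m * ((a w:ℂ) * deriv (v m) w)) (𝓝[<] p)
          (𝓝 (μ m * Lv m)) := (hLv m hm1 hm2).const_mul _
      exact ((t1.add t2).add t3).add t4
    -- right flux limit
    have hFR : Tendsto (fun w => (a w:ℂ) * deriv U w) (𝓝[>] p)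
        (𝓝 ((a p:ℂ) * deriv (u m) p + Ru m + μ m * Rv m + μ (m+1) * VR m)) := by
      have hEq : (fun w => (a w:ℂ) * deriv (u m) w + (a w:ℂ) * deriv (u (m+1)) w
            + μ m * ((a w:ℂ) * deriv (v m) w) + μ (m+1) * ((a w:ℂ) * deriv (v (m+1)) w))
          =ᶠ[𝓝[>] p] (fun w => (a w:ℂ) * deriv U w) := by
        filter_upwards [hRmem] with w hw
        exact ((hSR w hw).2.2.2).symm
      refine Tendsto.congr' hEq ?_
      have t1 : Tendsto (fun w => (a w:ℂ) * deriv (u m) w) (𝓝[>] p)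
          (𝓝 ((a p:ℂ) * deriv (u m) p)) := hCm.mono_left nhdsWithin_le_nhds
      have t2 : Tendsto (fun w => (a w:ℂ) * deriv (u (m+1)) w) (𝓝[>] p) (𝓝 (Ru m)) :=
        hRu m hm1 hm2
      have t3 : Tendsto (fun w => μ m * ((a w:ℂ) * deriv (v m) w)) (𝓝[>] p)
          (𝓝 (μ m * Rv m)) := (hRv m hm1 hm2).const_mul _
      have t4 : Tendsto (fun w => μ (m+1) * ((a w:ℂ) * deriv (v (m+1)) w)) (𝓝[>] p)
          (𝓝 (μ (m+1) * VR m)) := by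
        by_cases hc : m + 1 ≤ N₀ - 1
        · exact (hVR m hm1 hc).const_mul _
        · have hz : m + 1 = N₀ := by omega
          simp only [hz, hμN, zero_mul]
          exact tendsto_const_nhds
      exact ((t1.add t2).add t3).add t4
    -- the two limits agree thanks to the linking equation
    have hRL : (a p:ℂ) * deriv (u m) p + Ru m + μ m * Rv m + μ (m+1) * VR m
        = Lu m + (a p:ℂ) * deriv (u m) p + μ (m-1) * VL m + μ m * Lv m := by
      have h1 := hlink m hm1 hm2
      have h2 := hjump m hm1 hm2
      linear_combination h1 + μ m * h2
    rw [hRL] at hFR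
    -- punctured-neighbourhood facts
    have hT : Set.Ioo (x ((m:ℤ)-1)) (x ((m:ℤ)+1)) ∈ 𝓝 p :=
      isOpen_Ioo.mem_nhds ⟨hxlm, hxrm⟩
    have hpunct : ∀ᶠ w in 𝓝[≠] p, DifferentiableAt ℝ U w ∧
        DifferentiableAt ℝ (fun t => (a t:ℂ) * deriv U t) w ∧
        deriv (fun t => (a t:ℂ) * deriv U t) w + k w * U w = f w := by
      filter_upwards [mem_nhdsWithin_of_mem_nhds hT, self_mem_nhdsWithin] with w hw hne
      rcases lt_or_gt_of_ne (hne : w ≠ p) with h | h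
      · have h' := hSL w ⟨hw.1, h⟩
        exact ⟨h'.1, h'.2.1, h'.2.2.1⟩
      · have h' := hSR w ⟨h, hw.2⟩
        exact ⟨h'.1, h'.2.1, h'.2.2.1⟩
    have hFne : Tendsto (fun w => (a w:ℂ) * deriv U w) (𝓝[≠] p)
        (𝓝 (Lu m + (a p:ℂ) * deriv (u m) p + μ (m-1) * VL m + μ m * Lv m)) := by
      rw [← nhdsLT_sup_nhdsGT]
      exact tendsto_sup.2 ⟨hFL, hFR⟩
    have haC' : ContinuousAt a p := haC.continuousAt (isOpen_Ioo.mem_nhds hp01)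
    have hane : (a p : ℂ) ≠ 0 := Complex.ofReal_ne_zero.mpr (hapos p hp01).ne'
    have haCt : Tendsto (fun w => ((a w : ℝ) : ℂ)⁻¹) (𝓝 p) (𝓝 ((a p:ℂ)⁻¹)) :=
      (Complex.continuous_ofReal.continuousAt.comp haC').inv₀ hane
    have hane' : ∀ᶠ w in 𝓝[≠] p, (a w : ℂ) ≠ 0 := by
      filter_upwards [mem_nhdsWithin_of_mem_nhds (isOpen_Ioo.mem_nhds hp01)] with w hw
      exact Complex.ofReal_ne_zero.mpr (hapos w hw).ne'
    have hdUt : Tendsto (fun w => deriv U w) (𝓝[≠] p)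
        (𝓝 ((a p:ℂ)⁻¹ * (Lu m + (a p:ℂ) * deriv (u m) p + μ (m-1) * VL m + μ m * Lv m))) := by
      have hEq : (fun w => ((a w : ℝ) : ℂ)⁻¹ * ((a w:ℂ) * deriv U w)) =ᶠ[𝓝[≠] p]
          (fun w => deriv U w) := by
        filter_upwards [hane'] with w hw
        rw [inv_mul_cancel_left₀ hw]
      exact Tendsto.congr' hEq ((haCt.mono_left nhdsWithin_le_nhds).mul hFne)
    have hUcp : ContinuousAt U p := hUcont.continuousAt (Icc_mem_nhds hp01.1 hp01.2)
    have hdU := glue_point hUcp (hpunct.mono fun w hw => hw.1) hdUt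
    have hderivUp : deriv U p
        = (a p:ℂ)⁻¹ * (Lu m + (a p:ℂ) * deriv (u m) p + μ (m-1) * VL m + μ m * Lv m) :=
      hdU.deriv
    have hFp : (a p:ℂ) * deriv U p
        = Lu m + (a p:ℂ) * deriv (u m) p + μ (m-1) * VL m + μ m * Lv m := by
      rw [hderivUp, mul_inv_cancel_left₀ hane]
    have hFcont : ContinuousAt (fun w => (a w:ℂ) * deriv U w) p := by
      show Tendsto (fun w => (a w:ℂ) * deriv U w) (𝓝 p) (𝓝 ((a p:ℂ) * deriv U p))
      rw [hFp, ← nhdsNE_sup_pure p]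
      refine tendsto_sup.2 ⟨hFne, ?_⟩
      have := tendsto_pure_nhds (fun w => (a w:ℂ) * deriv U w) p
      rwa [hFp] at this
    have hkt : Tendsto k (𝓝 p) (𝓝 (k p)) := hkC.continuousAt (isOpen_Ioo.mem_nhds hp01)
    have hft : Tendsto f (𝓝 p) (𝓝 (f p)) := hfC.continuousAt (isOpen_Ioo.mem_nhds hp01)
    have hdFt : Tendsto (fun w => deriv (fun t => (a t:ℂ) * deriv U t) w) (𝓝[≠] p)
        (𝓝 (f p - k p * U p)) := by
      have hEq : (fun w => f w - k w * U w) =ᶠ[𝓝[≠] p]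
          (fun w => deriv (fun t => (a t:ℂ) * deriv U t) w) := by
        filter_upwards [hpunct] with w hw
        linear_combination -hw.2.2
      exact Tendsto.congr' hEq ((hft.mono_left nhdsWithin_le_nhds).sub
        ((hkt.mono_left nhdsWithin_le_nhds).mul (hUcp.tendsto.mono_left nhdsWithin_le_nhds)))
    have hdF := glue_point hFcont (hpunct.mono fun w hw => hw.2.1) hdFt
    refine ⟨hdU.differentiableAt, hdF.differentiableAt, ?_⟩
    rw [hdF.deriv]
    ring
  -- boundary values
  have hU0 : U 0 = g₀ := by
    have h1 : ∑ j ∈ Finset.range (N₀+1), u j 0 = g₀ := by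
      rw [Finset.sum_eq_single 0]
      · exact hu0
      · intro j hj hj0
        have hjN : j ≤ N₀ := by simp at hj; omega
        by_cases hj1 : j = 1
        · subst hj1
          have h := huL 1 le_rfl (by omega)
          rwa [show ((1:ℕ):ℤ) - 1 = 0 by norm_num, hx0] at h
        · apply husupp j hjN 0 (by constructor <;> norm_num)
          intro hmem
          have hlt0 : (0:ℝ) < x ((j:ℤ)-1) := by
            rw [← hx0]; exact hlt 0 ((j:ℤ)-1) (by omega) (by omega) (by omega)
          exact absurd hmem.1 (not_le.2 hlt0)
      · intro h; exact absurd (Finset.mem_range.2 (by omega)) h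
    have h2 : ∑ j ∈ Finset.Icc 1 (N₀-1), μ j * v j 0 = 0 := by
      apply Finset.sum_eq_zero
      intro j hj
      simp only [Finset.mem_Icc] at hj
      by_cases hj1 : j = 1
      · subst hj1
        have h := (hvbc 1 le_rfl (by omega)).1
        rw [show ((1:ℕ):ℤ) - 1 = 0 by norm_num, hx0] at h
        rw [h, mul_zero]
      · rw [hvsupp j hj.1 hj.2 0 (by constructor <;> norm_num) ?_, mul_zero]
        intro hmem
        have hlt0 : (0:ℝ) < x ((j:ℤ)-1) := by
          rw [← hx0]; exact hlt 0 ((j:ℤ)-1) (by omega) (by omega) (by omega)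
        exact absurd hmem.1 (not_le.2 hlt0)
    rw [hU]
    show ∑ j ∈ Finset.range (N₀+1), u j 0 + ∑ j ∈ Finset.Icc 1 (N₀-1), μ j * v j 0 = g₀
    rw [h1, h2, add_zero]
  have hU1 : U 1 = g₁ := by
    have hcN : ((N₀-1:ℕ):ℤ) + 1 = (N₀:ℤ) := by omega
    have h1 : ∑ j ∈ Finset.range (N₀+1), u j 1 = g₁ := by
      rw [Finset.sum_eq_single N₀]
      · exact huN
      · intro j hj hj0
        have hjN : j ≤ N₀ := by simp at hj; omega
        by_cases hj1 : j = N₀ - 1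
        · subst hj1
          have h := huR (N₀-1) le_rfl
          rwa [hcN, hxN] at h
        · apply husupp j hjN 1 (by constructor <;> norm_num)
          intro hmem
          have hlt1 : x ((j:ℤ)+1) < 1 := by
            rw [← hxN]; exact hlt ((j:ℤ)+1) (N₀:ℤ) (by omega) (by omega) (by omega)
          exact absurd hmem.2 (not_le.2 hlt1)
      · intro h; exact absurd (Finset.mem_range.2 (by omega)) h
    have h2 : ∑ j ∈ Finset.Icc 1 (N₀-1), μ j * v j 1 = 0 := by
      apply Finset.sum_eq_zero
      intro j hj
      simp only [Finset.mem_Icc] at hj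
      by_cases hj1 : j = N₀ - 1
      · subst hj1
        have h := (hvbc (N₀-1) (by omega) le_rfl).2
        rw [hcN, hxN] at h
        rw [h, mul_zero]
      · rw [hvsupp j hj.1 hj.2 1 (by constructor <;> norm_num) ?_, mul_zero]
        intro hmem
        have hlt1 : x ((j:ℤ)+1) < 1 := by
          rw [← hxN]; exact hlt ((j:ℤ)+1) (N₀:ℤ) (by omega) (by omega) (by omega)
        exact absurd hmem.2 (not_le.2 hlt1)
    rw [hU]
    show ∑ j ∈ Finset.range (N₀+1), u j 1 + ∑ j ∈ Finset.Icc 1 (N₀-1), μ j * v j 1 = g₁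
    rw [h1, h2, add_zero]
  -- classification of points of (0,1) and conclusion
  have main : ∀ y ∈ Set.Ioo (0:ℝ) 1, DifferentiableAt ℝ U y ∧
      DifferentiableAt ℝ (fun w => (a w:ℂ) * deriv U w) y ∧
      deriv (fun w => (a w:ℂ) * deriv U w) y + k y * U y = f y := by
    intro y hy
    have hP0 : x ((0:ℕ):ℤ) ≤ y := by
      rw [show (((0:ℕ)):ℤ) = 0 by norm_num, hx0]; exact hy.1.le
    set m := Nat.findGreatest (fun i => x (i:ℤ) ≤ y) N₀ with hmdef
    have hPm : x ((m:ℕ):ℤ) ≤ y := Nat.findGreatest_spec (P := fun i : ℕ => x (i:ℤ) ≤ y) (Nat.zero_le N₀) hP0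
    have hmN : m ≤ N₀ := Nat.findGreatest_le (P := fun i : ℕ => x (i:ℤ) ≤ y) N₀
    have hmlt : m < N₀ := by
      rcases eq_or_lt_of_le hmN with h | h
      · exfalso
        rw [h, hxN] at hPm
        exact absurd hy.2 (not_lt.2 hPm)
      · exact h
    have hnot : ¬ x (((m+1:ℕ)):ℤ) ≤ y :=
      Nat.findGreatest_is_greatest (P := fun i : ℕ => x (i:ℤ) ≤ y) (Nat.lt_succ_self m) (by omega)
    have hylt : y < x ((m:ℤ)+1) := by
      have h := not_le.1 hnot
      rwa [show ((m+1:ℕ):ℤ) = (m:ℤ)+1 by push_cast; ring] at h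
    rcases eq_or_lt_of_le hPm with heq | hlt'
    · have hm1 : 1 ≤ m := by
        by_contra h
        have hm0 : m = 0 := by omega
        rw [hm0, show (((0:ℕ)):ℤ) = 0 by norm_num, hx0] at heq
        exact absurd hy.1 (by rw [← heq]; exact lt_irrefl 0)
      have h := stepB m hm1 (by omega)
      rwa [heq] at h
    · have h := stepA m (by omega) y ⟨hlt', hylt⟩
      exact ⟨h.1, h.2.1, h.2.2.1⟩
  exact ⟨hUcont, hU0, hU1, fun y hy => (main y hy).1, fun y hy => (main y hy).2.1,
    fun y hy => (main y hy).2.2⟩
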